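/- Radial powers of the Grushin gauge are eigenfunctions of the Grushin operator outside the origin: for q ∈ ℝ and z = (x,y) with x ≠ 0 and (x,y) ≠ 0, the function Ψ(z) = d(z)^q satisfies Δ_γ Ψ(z) = q(q − 2 + N_γ) · d(z)^{q−2−2γ} · |x|^{2γ}, where Δ_γ u = Δ_x u + |x|^{2γ} Δ_y u and d(x,y) = (|x|^{2(γ+1)} + (γ+1)²|y|²)^{1/(2(γ+1))}. -/

import Mathlib

/-- The Euclidean Laplacian of `f : ℝⁿ → ℝ` at `x`, as the sum of the second
derivatives along the coordinate directions. -/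
noncomputable def lapE {n : ℕ} (f : EuclideanSpace ℝ (Fin n) → ℝ)
    (x : EuclideanSpace ℝ (Fin n)) : ℝ :=
  ∑ i : Fin n, fderiv ℝ (fun y => fderiv ℝ f y (EuclideanSpace.single i (1 : ℝ))) x
    (EuclideanSpace.single i (1 : ℝ))

open Filter Topology Real

lemma lapE_comp_normSq {n : ℕ} (φ a : ℝ → ℝ) {b : ℝ} (x : EuclideanSpace ℝ (Fin n))
    (h1 : ∀ᶠ t in 𝓝 (‖x‖^2), HasDerivAt φ (a t) t)
    (h2 : HasDerivAt a b (‖x‖^2)) :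
    lapE (fun x' => φ (‖x'‖^2)) x = 4 * b * ‖x‖^2 + 2 * n * a (‖x‖^2) := by
  have hu : ∀ x' : EuclideanSpace ℝ (Fin n),
      HasFDerivAt (fun z : EuclideanSpace ℝ (Fin n) => ‖z‖^2) (2 • (innerSL ℝ x')) x' :=
    fun x' => (hasStrictFDerivAt_norm_sq x').hasFDerivAt
  have hcont : ContinuousAt (fun z : EuclideanSpace ℝ (Fin n) => ‖z‖^2) x :=
    (continuous_norm.pow 2).continuousAt
  have hev : ∀ᶠ x' : EuclideanSpace ℝ (Fin n) in 𝓝 x,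
      HasDerivAt φ (a (‖x'‖^2)) (‖x'‖^2) := hcont.eventually h1
  have key : ∀ i : Fin n, ∀ᶠ x' : EuclideanSpace ℝ (Fin n) in 𝓝 x,
      fderiv ℝ (fun z => φ (‖z‖^2)) x' (EuclideanSpace.single i (1:ℝ))
        = a (‖x'‖^2) * (2 * x' i) := by
    intro i
    filter_upwards [hev] with x' hx'
    have hF : HasFDerivAt (fun z : EuclideanSpace ℝ (Fin n) => φ (‖z‖^2))
        (a (‖x'‖^2) • (2 • (innerSL ℝ x'))) x' := hx'.comp_hasFDerivAt x' (hu x')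
    rw [hF.fderiv]
    simp [EuclideanSpace.inner_single_right, real_inner_comm, mul_comm]
  have hgi : ∀ i : Fin n,
      HasFDerivAt (fun x' : EuclideanSpace ℝ (Fin n) => a (‖x'‖^2) * (2 * x' i))
        (a (‖x‖^2) • ((2:ℝ) • (innerSL ℝ (EuclideanSpace.single i (1:ℝ))))
          + (2 * x i) • (b • (2 • (innerSL ℝ x)))) x := by
    intro i
    have h2' : HasFDerivAt (fun x' : EuclideanSpace ℝ (Fin n) => a (‖x'‖^2))
        (b • (2 • (innerSL ℝ x))) x := h2.comp_hasFDerivAt x (hu x)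
    have hproj : HasFDerivAt (fun x' : EuclideanSpace ℝ (Fin n) => 2 * x' i)
        ((2:ℝ) • (innerSL ℝ (EuclideanSpace.single i (1:ℝ)))) x := by
      have : HasFDerivAt (fun x' : EuclideanSpace ℝ (Fin n) =>
          (innerSL ℝ (EuclideanSpace.single i (1:ℝ))) x')
          (innerSL ℝ (EuclideanSpace.single i (1:ℝ))) x :=
        (innerSL ℝ (EuclideanSpace.single i (1:ℝ))).hasFDerivAt
      have := this.const_mul (2:ℝ)
      simpa [EuclideanSpace.inner_single_left] using this
    exact h2'.mul hproj
  have step : ∀ i : Fin n,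
      fderiv ℝ (fun x' => fderiv ℝ (fun z => φ (‖z‖^2)) x' (EuclideanSpace.single i (1:ℝ))) x
        (EuclideanSpace.single i (1:ℝ))
      = 4 * b * (x i)^2 + 2 * a (‖x‖^2) := by
    intro i
    have heq : (fun x' => fderiv ℝ (fun z => φ (‖z‖^2)) x' (EuclideanSpace.single i (1:ℝ)))
        =ᶠ[𝓝 x] fun x' => a (‖x'‖^2) * (2 * x' i) := key i
    rw [heq.fderiv_eq, (hgi i).fderiv]
    simp [EuclideanSpace.inner_single_right, EuclideanSpace.inner_single_left,
      EuclideanSpace.single_apply, real_inner_comm]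
    ring
  have hsum : ∑ i : Fin n, (x i)^2 = ‖x‖^2 := by
    exact (EuclideanSpace.real_norm_sq_eq x).symm
  unfold lapE
  rw [Finset.sum_congr rfl (fun i _ => step i)]
  rw [Finset.sum_add_distrib]
  simp [← Finset.mul_sum, hsum]
  ring

lemma hd_phi (γ B e : ℝ) (hB : 0 ≤ B) {t : ℝ} (ht : 0 < t) :
    HasDerivAt (fun s : ℝ => (s ^ (γ+1) + B) ^ e)
      (e * ((t ^ (γ+1) + B) ^ (e-1) * ((γ+1) * t ^ γ))) t := by
  have h0 : HasDerivAt (fun s : ℝ => s ^ (γ+1) + B) ((γ+1) * t ^ γ) t := by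
    have := (Real.hasDerivAt_rpow_const (p := γ+1) (Or.inl ht.ne')).add_const B
    simpa using this
  have hρ : t ^ (γ+1) + B ≠ 0 :=
    (add_pos_of_pos_of_nonneg (Real.rpow_pos_of_pos ht _) hB).ne'
  have := h0.rpow_const (p := e) (Or.inl hρ)
  convert this using 1
  ring

lemma hd_phi' (γ B e : ℝ) (hB : 0 ≤ B) {t : ℝ} (ht : 0 < t) :
    HasDerivAt (fun s : ℝ => e * ((s ^ (γ+1) + B) ^ (e-1) * ((γ+1) * s ^ γ)))
      (e * ((((γ+1)*t^γ) * (e-1) * (t^(γ+1)+B)^(e-2)) * ((γ+1)*t^γ)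
        + (t^(γ+1)+B)^(e-1) * ((γ+1) * (γ * t^(γ-1))))) t := by
  have h0 : HasDerivAt (fun s : ℝ => s ^ (γ+1) + B) ((γ+1) * t ^ γ) t := by
    have := (Real.hasDerivAt_rpow_const (p := γ+1) (Or.inl ht.ne')).add_const B
    simpa using this
  have hρ : t ^ (γ+1) + B ≠ 0 :=
    (add_pos_of_pos_of_nonneg (Real.rpow_pos_of_pos ht _) hB).ne'
  have hA : HasDerivAt (fun s : ℝ => (s ^ (γ+1) + B) ^ (e-1))
      (((γ+1)*t^γ) * (e-1) * (t^(γ+1)+B)^(e-1-1)) t := h0.rpow_const (Or.inl hρ)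
  rw [show e-1-1 = e-2 by ring] at hA
  have hB' : HasDerivAt (fun s : ℝ => (γ+1) * s ^ γ) ((γ+1) * (γ * t^(γ-1))) t :=
    (Real.hasDerivAt_rpow_const (p := γ) (Or.inl ht.ne')).const_mul (γ+1)
  exact (hA.mul hB').const_mul e

lemma hd_psi (A c2 e : ℝ) {t : ℝ} (hpos : 0 < A + c2*t) :
    HasDerivAt (fun s : ℝ => (A + c2*s) ^ e) (c2 * e * (A + c2*t) ^ (e-1)) t := by
  have h0 : HasDerivAt (fun s : ℝ => A + c2*s) c2 t := by
    simpa using ((hasDerivAt_id t).const_mul c2).const_add A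
  exact h0.rpow_const (p := e) (Or.inl hpos.ne')

lemma hd_psi' (A c2 e : ℝ) {t : ℝ} (hpos : 0 < A + c2*t) :
    HasDerivAt (fun s : ℝ => c2 * e * (A + c2*s) ^ (e-1))
      (c2 * e * (c2 * (e-1) * (A + c2*t) ^ (e-2))) t := by
  have h0 : HasDerivAt (fun s : ℝ => A + c2*s) c2 t := by
    simpa using ((hasDerivAt_id t).const_mul c2).const_add A
  have hA : HasDerivAt (fun s : ℝ => (A + c2*s) ^ (e-1))
      (c2 * (e-1) * (A + c2*t) ^ (e-1-1)) t := h0.rpow_const (Or.inl hpos.ne')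
  rw [show e-1-1 = e-2 by ring] at hA
  exact hA.const_mul (c2 * e)

/-- Radial powers of the Grushin gauge `d(x,y) = (|x|^{2(γ+1)} + (γ+1)²|y|²)^{1/(2(γ+1))}`
are eigenfunctions of the Grushin operator `Δ_γ = Δ_x + |x|^{2γ} Δ_y` away from `x = 0`:
`Δ_γ (d^q) = q (q - 2 + N_γ) d^{q-2-2γ} |x|^{2γ}`. -/
theorem grushin_gauge_power (m l : ℕ) (hm : 1 ≤ m) (hl : 1 ≤ l) (γ q : ℝ) (hγ : 0 ≤ γ)
    (x : EuclideanSpace ℝ (Fin m)) (y : EuclideanSpace ℝ (Fin l))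
    (hx : x ≠ 0) (hz : (x, y) ≠ 0) :
    lapE (fun x' => ((‖x'‖ ^ (2 * (γ + 1)) + (γ + 1) ^ 2 * ‖y‖ ^ 2) ^ (1 / (2 * (γ + 1)))) ^ q) x
      + ‖x‖ ^ (2 * γ) *
        lapE (fun y' => ((‖x‖ ^ (2 * (γ + 1)) + (γ + 1) ^ 2 * ‖y'‖ ^ 2) ^ (1 / (2 * (γ + 1)))) ^ q) y
    = q * (q - 2 + ((m : ℝ) + (1 + γ) * l)) *
        ((‖x‖ ^ (2 * (γ + 1)) + (γ + 1) ^ 2 * ‖y‖ ^ 2) ^ (1 / (2 * (γ + 1)))) ^ (q - 2 - 2 * γ) *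
        ‖x‖ ^ (2 * γ) := by
  have hc : (0:ℝ) < γ + 1 := by linarith
  have hxn : 0 < ‖x‖ := norm_pos_iff.mpr hx
  have ht : (0:ℝ) < ‖x‖^2 := by positivity
  set e := q / (2*(γ+1)) with he
  set B := (γ+1)^2 * ‖y‖^2 with hBdef
  have hB : 0 ≤ B := by positivity
  set A := ‖x‖ ^ (2*(γ+1)) with hAdef
  have hApos : 0 < A := Real.rpow_pos_of_pos hxn _
  have hsq : ∀ z : ℝ, 0 ≤ z → z ^ (2*(γ+1)) = ((z^2 : ℝ)) ^ (γ+1) := by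
    intro z hz
    rw [Real.rpow_mul hz, Real.rpow_two]
  have hexp : (1/(2*(γ+1))) * q = e := by
    rw [he]; field_simp
  -- rewrite the x-function
  have hfx : (fun x' : EuclideanSpace ℝ (Fin m) =>
      ((‖x'‖ ^ (2*(γ+1)) + B) ^ (1/(2*(γ+1)))) ^ q)
      = fun x' : EuclideanSpace ℝ (Fin m) =>
        (((‖x'‖^2 : ℝ)) ^ (γ+1) + B) ^ e := by
    funext x'
    have h0 : (0:ℝ) ≤ ((‖x'‖^2 : ℝ)) ^ (γ+1) + B :=
      add_nonneg (Real.rpow_nonneg (by positivity) _) hB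
    rw [hsq _ (norm_nonneg x'), ← Real.rpow_mul h0, hexp]
  have hfy : (fun y' : EuclideanSpace ℝ (Fin l) =>
      ((A + (γ+1)^2 * ‖y'‖^2) ^ (1/(2*(γ+1)))) ^ q)
      = fun y' : EuclideanSpace ℝ (Fin l) =>
        (A + (γ+1)^2 * (‖y'‖^2 : ℝ)) ^ e := by
    funext y'
    have h0 : (0:ℝ) ≤ A + (γ+1)^2 * ‖y'‖^2 := by positivity
    rw [← Real.rpow_mul h0, hexp]
  -- x-part Laplacian
  have h1x : ∀ᶠ t' in 𝓝 (‖x‖^2), HasDerivAt (fun t : ℝ => (t ^ (γ+1) + B) ^ e)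
      ((fun t : ℝ => e * ((t ^ (γ+1) + B) ^ (e-1) * ((γ+1) * t ^ γ))) t') t' := by
    filter_upwards [eventually_gt_nhds ht] with t' ht'
    exact hd_phi γ B e hB ht'
  have h2x := hd_phi' γ B e hB ht
  have Lx : lapE (fun x' : EuclideanSpace ℝ (Fin m) =>
      ((‖x'‖ ^ (2*(γ+1)) + B) ^ (1/(2*(γ+1)))) ^ q) x
      = 4 * (e * ((((γ+1)*(‖x‖^2:ℝ)^γ) * (e-1) * ((‖x‖^2:ℝ)^(γ+1)+B)^(e-2)) * ((γ+1)*(‖x‖^2:ℝ)^γ)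
          + ((‖x‖^2:ℝ)^(γ+1)+B)^(e-1) * ((γ+1) * (γ * (‖x‖^2:ℝ)^(γ-1))))) * ‖x‖^2
        + 2 * m * (e * (((‖x‖^2:ℝ)^(γ+1)+B)^(e-1) * ((γ+1) * (‖x‖^2:ℝ)^γ))) := by
    rw [hfx]
    exact lapE_comp_normSq _ _ x h1x h2x
  -- y-part Laplacian
  have hAB : (0:ℝ) < A + (γ+1)^2 * ‖y‖^2 := by positivity
  have h1y : ∀ᶠ t' in 𝓝 (‖y‖^2), HasDerivAt (fun t : ℝ => (A + (γ+1)^2 * t) ^ e)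
      ((fun t : ℝ => (γ+1)^2 * e * (A + (γ+1)^2 * t) ^ (e-1)) t') t' := by
    have hcont : ContinuousAt (fun t : ℝ => A + (γ+1)^2 * t) (‖y‖^2) := by fun_prop
    filter_upwards [hcont.eventually (eventually_gt_nhds hAB)] with t' ht'
    exact hd_psi A ((γ+1)^2) e ht'
  have h2y := hd_psi' A ((γ+1)^2) e hAB
  have Ly : lapE (fun y' : EuclideanSpace ℝ (Fin l) =>
      ((A + (γ+1)^2 * ‖y'‖^2) ^ (1/(2*(γ+1)))) ^ q) y
      = 4 * ((γ+1)^2 * e * ((γ+1)^2 * (e-1) * (A + (γ+1)^2 * ‖y‖^2) ^ (e-2))) * ‖y‖^2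
        + 2 * l * ((γ+1)^2 * e * (A + (γ+1)^2 * ‖y‖^2) ^ (e-1)) := by
    rw [hfy]
    exact lapE_comp_normSq _ _ y h1y h2y
  rw [Lx, Ly]
  -- rewrite remaining rpow terms
  have hRpow : ((A + B) ^ (1/(2*(γ+1)))) ^ (q-2-2*γ) = (A + B) ^ (e-1) := by
    rw [← Real.rpow_mul (by positivity)]
    congr 1
    rw [he]; field_simp; ring
  have hA2 : A = ((‖x‖^2 : ℝ)) ^ (γ+1) := by
    rw [hAdef]; exact hsq _ (norm_nonneg x)
  have hxγ : ‖x‖ ^ (2*γ) = ((‖x‖^2 : ℝ)) ^ γ := by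
    rw [Real.rpow_mul (norm_nonneg x), Real.rpow_two]
  rw [hRpow, hA2, hxγ, hBdef]
  set T : ℝ := ‖x‖^2 with hT
  set V : ℝ := ‖y‖^2 with hV
  have hρpos : (0:ℝ) < T^(γ+1) + (γ+1)^2 * V := by
    have := Real.rpow_pos_of_pos ht (γ+1)
    positivity
  set ρ : ℝ := T^(γ+1) + (γ+1)^2 * V with hρdef
  set S : ℝ := ρ^(e-2) with hS
  set P : ℝ := T^(γ-1) with hP
  have e1 : T ^ γ = P * T := by
    rw [hP, ← Real.rpow_add_one ht.ne', sub_add_cancel]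
  have e2 : T ^ (γ+1) = P * T * T := by
    rw [hP, ← Real.rpow_add_one ht.ne', ← Real.rpow_add_one ht.ne', sub_add_cancel]
  have e3 : ρ ^ (e-1) = S * ρ := by
    rw [hS, ← Real.rpow_add_one hρpos.ne', show e-2+1 = e-1 by ring]
  have hrel : ρ = P * T * T + (γ+1)^2 * V := by rw [hρdef, e2]
  have hq : q = 2*(γ+1)*e := by rw [he]; field_simp
  rw [e3, e1, hq]
  linear_combination (-(4*e*(e-1)*(γ+1)^2*S*P*T)) * hrel
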